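/- Let 𝐗₁ = (X₁; Y₁) and 𝐗₂ = (X₂; Y₂) be frames for Lagrangian subspaces ℓ₁ and ℓ₂ of ℂ^{2n}, and let w̃ ∈ ℂ with |w̃| = 1. Define 𝐗₃ := i(1 − w̃)𝐗₂ − (1 + w̃)J𝐗₂. Then 𝐗₃ is a frame for a Lagrangian subspace ℓ₃ of ℂ^{2n}, and dim ker(W̃ − w̃ I) = dim ker(𝐗₁* J 𝐗₃) = dim(ℓ₁ ∩ ℓ₃). -/

import Mathlib

open Matrix

noncomputable section

def Jmat (n : ℕ) : Matrix (Fin n ⊕ Fin n) (Fin n ⊕ Fin n) ℂ :=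
  Matrix.fromBlocks 0 (-1) 1 0

/-- The `2n × n` matrix with `n × n` blocks `X` (top) and `Y` (bottom). -/
def frame {n : ℕ} (X Y : Matrix (Fin n) (Fin n) ℂ) :
    Matrix (Fin n ⊕ Fin n) (Fin n) ℂ :=
  Matrix.fromRows X Y

/-- A subspace `ℓ ⊆ ℂ^{2n}` is Lagrangian if it has dimension `n` and
`(Ju, v) = 0` for all `u, v ∈ ℓ`. -/
def IsLagrangianSubspace (n : ℕ) (ℓ : Submodule ℂ ((Fin n ⊕ Fin n) → ℂ)) : Prop :=
  Module.finrank ℂ ℓ = n ∧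
    ∀ u ∈ ℓ, ∀ v ∈ ℓ, star ((Jmat n) *ᵥ u) ⬝ᵥ v = 0

/-- The column span of the frame `(X; Y)`. -/
def frameSpan {n : ℕ} (X Y : Matrix (Fin n) (Fin n) ℂ) :
    Submodule ℂ ((Fin n ⊕ Fin n) → ℂ) :=
  Submodule.span ℂ (Set.range (frame X Y)ᵀ)

/-- `(X; Y)` is a frame for a Lagrangian subspace of `ℂ^{2n}`:
its columns span a Lagrangian subspace. -/
def IsLagrangianFrame {n : ℕ} (X Y : Matrix (Fin n) (Fin n) ℂ) : Prop :=
  IsLagrangianSubspace n (frameSpan X Y)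

/-- `W̃ := −(X₁ + iY₁)(X₁ − iY₁)⁻¹(X₂ − iY₂)(X₂ + iY₂)⁻¹`. -/
def tW {n : ℕ} (X₁ Y₁ X₂ Y₂ : Matrix (Fin n) (Fin n) ℂ) : Matrix (Fin n) (Fin n) ℂ :=
  -((X₁ + Complex.I • Y₁) * (X₁ - Complex.I • Y₁)⁻¹ *
    ((X₂ - Complex.I • Y₂) * (X₂ + Complex.I • Y₂)⁻¹))

section Helpers

variable {n : ℕ}

lemma J_sq : Jmat n * Jmat n = -1 := by
  ext (i|i) (j|j) <;>
    simp [Jmat, Matrix.fromBlocks_multiply, Matrix.one_apply, eq_comm]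

lemma J_H : (Jmat n)ᴴ = -(Jmat n) := by
  ext (i|i) (j|j) <;>
    simp [Jmat, fromBlocks_conjTranspose, Matrix.one_apply, eq_comm]

lemma J_unit : IsUnit (Jmat n) :=
  ⟨⟨Jmat n, -(Jmat n), by rw [Matrix.mul_neg, J_sq, neg_neg],
    by rw [Matrix.neg_mul, J_sq, neg_neg]⟩, rfl⟩

lemma frame_H (X Y : Matrix (Fin n) (Fin n) ℂ) :
    (frame X Y)ᴴ = fromCols Xᴴ Yᴴ :=
  conjTranspose_fromRows_eq_fromCols_conjTranspose X Y

lemma J_mul_frame (X Y : Matrix (Fin n) (Fin n) ℂ) :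
    Jmat n * frame X Y = frame (-Y) X := by
  simp [Jmat, frame, fromBlocks_mul_fromRows]

lemma frameH_J_frame (A B C D : Matrix (Fin n) (Fin n) ℂ) :
    (frame A B)ᴴ * Jmat n * frame C D = Bᴴ * C - Aᴴ * D := by
  rw [Matrix.mul_assoc, J_mul_frame, frame_H, frame, fromCols_mul_fromRows]
  simp [Matrix.mul_neg]
  abel

lemma star_J_dot (u v : (Fin n ⊕ Fin n) → ℂ) :
    star (Jmat n *ᵥ u) ⬝ᵥ v = -(star u ⬝ᵥ (Jmat n *ᵥ v)) := by
  rw [star_mulVec, dotProduct_mulVec, J_H, Matrix.vecMul_neg, neg_dotProduct,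
    ← dotProduct_mulVec]

lemma form_prod (A B : Matrix (Fin n ⊕ Fin n) (Fin n) ℂ) (a b : Fin n → ℂ) :
    star (Jmat n *ᵥ (A *ᵥ a)) ⬝ᵥ (B *ᵥ b)
      = -(star a ⬝ᵥ ((Aᴴ * Jmat n * B) *ᵥ b)) := by
  rw [star_J_dot, star_mulVec, mulVec_mulVec, dotProduct_mulVec, vecMul_vecMul,
    dotProduct_mulVec, Matrix.mul_assoc]

lemma eq_zero_of_forall_dot (M : Matrix (Fin n) (Fin n) ℂ)
    (h : ∀ a b, star a ⬝ᵥ (M *ᵥ b) = 0) : M = 0 := by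
  ext i j
  have h2 := h (Pi.single i (1:ℂ)) (Pi.single j (1:ℂ))
  have hs : (star (Pi.single i (1:ℂ)) : Fin n → ℂ) = Pi.single i (1:ℂ) := by
    funext k; simp only [Pi.star_apply, Pi.single_apply, apply_ite star, star_one, star_zero]
  rw [hs, mulVec_single, single_dotProduct] at h2
  simpa using h2

lemma frameSpan_eq_range (X Y : Matrix (Fin n) (Fin n) ℂ) :
    frameSpan X Y = LinearMap.range (frame X Y).mulVecLin :=
  (Matrix.range_mulVecLin _).symm

lemma finrank_pi_n : Module.finrank ℂ (Fin n → ℂ) = n := by simp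

lemma finrank_pi_2n : Module.finrank ℂ ((Fin n ⊕ Fin n) → ℂ) = n + n := by simp

lemma isLagrangianFrame_iff (X Y : Matrix (Fin n) (Fin n) ℂ) :
    IsLagrangianFrame X Y ↔
      Function.Injective (frame X Y).mulVecLin ∧
        (frame X Y)ᴴ * Jmat n * frame X Y = 0 := by
  constructor
  · rintro ⟨hrank, hiso⟩
    rw [frameSpan_eq_range] at hrank
    have hinj : Function.Injective (frame X Y).mulVecLin := by
      rw [← LinearMap.ker_eq_bot, ← Submodule.finrank_eq_zero (R := ℂ)]
      have h1 := LinearMap.finrank_range_add_finrank_ker (frame X Y).mulVecLin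
      rw [hrank, finrank_pi_n] at h1
      omega
    refine ⟨hinj, eq_zero_of_forall_dot _ fun a b => ?_⟩
    have hm : ∀ c : Fin n → ℂ, (frame X Y) *ᵥ c ∈ frameSpan X Y := by
      intro c; rw [frameSpan_eq_range]; exact ⟨c, rfl⟩
    have h2 := hiso _ (hm a) _ (hm b)
    rw [form_prod] at h2
    exact neg_eq_zero.mp h2
  · rintro ⟨hinj, hmat⟩
    constructor
    · rw [frameSpan_eq_range, LinearMap.finrank_range_of_inj hinj, finrank_pi_n]
    · intro u hu v hv
      rw [frameSpan_eq_range] at hu hv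
      obtain ⟨a, rfl⟩ := hu; obtain ⟨b, rfl⟩ := hv
      simp only [Matrix.mulVecLin_apply]
      rw [form_prod, hmat]
      simp

lemma frameH_frame (X Y : Matrix (Fin n) (Fin n) ℂ) :
    (frame X Y)ᴴ * frame X Y = Xᴴ * X + Yᴴ * Y := by
  rw [frame_H, frame, fromCols_mul_fromRows]

open scoped ComplexOrder in
lemma gram_unit {X Y : Matrix (Fin n) (Fin n) ℂ}
    (hinj : Function.Injective (frame X Y).mulVecLin) :
    IsUnit ((frame X Y)ᴴ * frame X Y) := by
  rw [← Matrix.mulVec_injective_iff_isUnit]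
  intro v w hvw
  have hz : ((frame X Y)ᴴ * frame X Y) *ᵥ (v - w) = 0 := by
    rw [Matrix.mulVec_sub, hvw, sub_self]
  have h0 : star (v - w) ⬝ᵥ (((frame X Y)ᴴ * frame X Y) *ᵥ (v - w)) = 0 := by
    rw [hz, dotProduct_zero]
  rw [← Matrix.mulVec_mulVec, dotProduct_mulVec, ← star_mulVec,
    dotProduct_star_self_eq_zero] at h0
  have h3 : (frame X Y).mulVecLin (v - w) = (frame X Y).mulVecLin 0 := by
    simpa [Matrix.mulVecLin_apply] using h0
  exact sub_eq_zero.mp (hinj h3)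

lemma XYcomm {X Y : Matrix (Fin n) (Fin n) ℂ}
    (hmat : (frame X Y)ᴴ * Jmat n * frame X Y = 0) : Yᴴ * X = Xᴴ * Y := by
  have h := frameH_J_frame X Y X Y
  rw [hmat] at h
  exact sub_eq_zero.mp h.symm

lemma plus_gram {X Y : Matrix (Fin n) (Fin n) ℂ} (hcomm : Yᴴ * X = Xᴴ * Y) :
    (X + Complex.I • Y)ᴴ * (X + Complex.I • Y) = (frame X Y)ᴴ * frame X Y := by
  rw [frameH_frame]
  simp only [conjTranspose_add, conjTranspose_smul, Complex.star_def, Complex.conj_I,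
    Matrix.add_mul, Matrix.mul_add, Matrix.smul_mul, Matrix.mul_smul, smul_smul,
    neg_mul, Complex.I_mul_I, neg_neg, one_smul, neg_smul, hcomm, smul_add, smul_sub,
    mul_neg, mul_one, one_mul]
  simp only [neg_one_zsmul, smul_neg, smul_smul, Complex.I_mul_I, neg_neg, neg_smul, one_smul]
  abel

lemma minus_gram {X Y : Matrix (Fin n) (Fin n) ℂ} (hcomm : Yᴴ * X = Xᴴ * Y) :
    (X - Complex.I • Y)ᴴ * (X - Complex.I • Y) = (frame X Y)ᴴ * frame X Y := by
  rw [frameH_frame]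
  simp only [conjTranspose_sub, conjTranspose_smul, Complex.star_def, Complex.conj_I,
    Matrix.sub_mul, Matrix.mul_sub, Matrix.smul_mul, Matrix.mul_smul, smul_smul,
    neg_mul, Complex.I_mul_I, neg_neg, one_smul, neg_smul, hcomm, smul_add, smul_sub,
    mul_neg, mul_one, one_mul]
  simp only [neg_one_zsmul, smul_neg, smul_smul, Complex.I_mul_I, neg_neg, neg_smul, one_smul]
  abel

lemma unit_of_gram {A : Matrix (Fin n) (Fin n) ℂ} (h : IsUnit (Aᴴ * A)) : IsUnit A := by
  rw [Matrix.isUnit_iff_isUnit_det] at h ⊢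
  rw [Matrix.det_mul] at h
  exact isUnit_of_mul_isUnit_right h

lemma ker_mul_left (A : Matrix (Fin n) (Fin n) ℂ)
    (N : Matrix (Fin n) (Fin n) ℂ) (hA : IsUnit A) :
    LinearMap.ker (A * N).mulVecLin = LinearMap.ker N.mulVecLin := by
  have hinj := Matrix.mulVec_injective_iff_isUnit.mpr hA
  ext v
  simp only [LinearMap.mem_ker, Matrix.mulVecLin_apply, ← Matrix.mulVec_mulVec]
  constructor
  · intro h
    have h2 : A *ᵥ (N *ᵥ v) = A *ᵥ 0 := by rw [Matrix.mulVec_zero]; exact h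
    exact hinj h2
  · intro h; rw [h, Matrix.mulVec_zero]

lemma finrank_ker_mul_right (N B : Matrix (Fin n) (Fin n) ℂ) (hB : IsUnit B) :
    Module.finrank ℂ (LinearMap.ker (N * B).mulVecLin)
      = Module.finrank ℂ (LinearMap.ker N.mulVecLin) := by
  have hBdet := (Matrix.isUnit_iff_isUnit_det B).mp hB
  let e : (Fin n → ℂ) ≃ₗ[ℂ] (Fin n → ℂ) :=
    LinearEquiv.ofLinear B.mulVecLin (B⁻¹).mulVecLin
      (by rw [← Matrix.mulVecLin_mul, Matrix.mul_nonsing_inv _ hBdet, Matrix.mulVecLin_one])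
      (by rw [← Matrix.mulVecLin_mul, Matrix.nonsing_inv_mul _ hBdet, Matrix.mulVecLin_one])
  have hker : LinearMap.ker (N * B).mulVecLin
      = Submodule.comap (e : (Fin n → ℂ) →ₗ[ℂ] (Fin n → ℂ)) (LinearMap.ker N.mulVecLin) := by
    ext v
    simp only [LinearMap.mem_ker, Submodule.mem_comap, LinearEquiv.coe_coe,
      LinearEquiv.ofLinear_apply, Matrix.mulVecLin_apply, ← Matrix.mulVec_mulVec, e]
  rw [hker, Submodule.comap_equiv_eq_map_symm]
  exact LinearEquiv.finrank_map_eq e.symm _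

open scoped ComplexOrder in
lemma span_eq_ker {X Y : Matrix (Fin n) (Fin n) ℂ} (h : IsLagrangianFrame X Y) :
    frameSpan X Y = LinearMap.ker ((frame X Y)ᴴ * Jmat n).mulVecLin := by
  obtain ⟨hinj, hmat⟩ := (isLagrangianFrame_iff X Y).mp h
  have hle : frameSpan X Y ≤ LinearMap.ker ((frame X Y)ᴴ * Jmat n).mulVecLin := by
    rw [frameSpan_eq_range]
    rintro u ⟨a, rfl⟩
    simp only [LinearMap.mem_ker, Matrix.mulVecLin_apply, Matrix.mulVec_mulVec, hmat,
      Matrix.zero_mulVec]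
  have hrank : ((frame X Y)ᴴ * Jmat n).rank = n := by
    rw [Matrix.rank_mul_eq_left_of_isUnit_det _ _ ((Matrix.isUnit_iff_isUnit_det _).mp J_unit),
      Matrix.rank_conjTranspose, Matrix.rank_eq_finrank_span_cols]
    exact h.1
  have hrank' : Module.finrank ℂ (LinearMap.range ((frame X Y)ᴴ * Jmat n).mulVecLin) = n :=
    hrank
  have hker : Module.finrank ℂ (LinearMap.ker ((frame X Y)ᴴ * Jmat n).mulVecLin) = n := by
    have h1 := LinearMap.finrank_range_add_finrank_ker ((frame X Y)ᴴ * Jmat n).mulVecLin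
    rw [hrank', finrank_pi_2n] at h1
    omega
  refine Submodule.eq_of_le_of_finrank_le hle ?_
  rw [hker, h.1]

end Helpers

section MainParts

variable {n : ℕ} {X₁ Y₁ X₂ Y₂ X₃ Y₃ : Matrix (Fin n) (Fin n) ℂ} {w : ℂ}

/-- extraction of blocks from `h₃` -/
lemma blocks_of_h₃ (h₃ : frame X₃ Y₃ =
      (Complex.I * (1 - w)) • frame X₂ Y₂ - (1 + w) • (Jmat n * frame X₂ Y₂)) :
    X₃ = (Complex.I * (1 - w)) • X₂ + (1 + w) • Y₂ ∧
      Y₃ = (Complex.I * (1 - w)) • Y₂ - (1 + w) • X₂ := by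
  rw [J_mul_frame] at h₃
  have h : frame X₃ Y₃ =
      frame ((Complex.I * (1 - w)) • X₂ + (1 + w) • Y₂)
        ((Complex.I * (1 - w)) • Y₂ - (1 + w) • X₂) := by
    rw [h₃]
    ext (i|i) j <;> simp [frame, Matrix.fromRows_apply_inl, Matrix.fromRows_apply_inr]
  exact fromRows_inj h

lemma expandPP (X Y X' Y' : Matrix (Fin n) (Fin n) ℂ) :
    (X + Complex.I • Y)ᴴ * (X' + Complex.I • Y')
      = (Xᴴ * X' + Yᴴ * Y') + Complex.I • (Xᴴ * Y') - Complex.I • (Yᴴ * X') := by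
  simp only [conjTranspose_add, conjTranspose_smul, Complex.star_def, Complex.conj_I,
    Matrix.add_mul, Matrix.mul_add, Matrix.smul_mul, Matrix.mul_smul, smul_smul,
    neg_mul, Complex.I_mul_I, neg_neg, one_smul, neg_smul, smul_add, smul_sub,
    mul_neg, mul_one, one_mul]
  simp only [neg_one_zsmul, smul_neg, smul_smul, Complex.I_mul_I, neg_neg, neg_smul, one_smul]
  abel

lemma expandMM (X Y X' Y' : Matrix (Fin n) (Fin n) ℂ) :
    (X - Complex.I • Y)ᴴ * (X' - Complex.I • Y')
      = (Xᴴ * X' + Yᴴ * Y') - Complex.I • (Xᴴ * Y') + Complex.I • (Yᴴ * X') := by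
  simp only [conjTranspose_sub, conjTranspose_smul, Complex.star_def, Complex.conj_I,
    Matrix.sub_mul, Matrix.mul_sub, Matrix.smul_mul, Matrix.mul_smul, smul_smul,
    neg_mul, Complex.I_mul_I, neg_neg, one_smul, neg_smul, smul_add, smul_sub,
    mul_neg, mul_one, one_mul]
  simp only [neg_one_zsmul, smul_neg, smul_smul, Complex.I_mul_I, neg_neg, neg_smul, one_smul]
  abel

lemma key_identity
    (hX₃ : X₃ = (Complex.I * (1 - w)) • X₂ + (1 + w) • Y₂)
    (hY₃ : Y₃ = (Complex.I * (1 - w)) • Y₂ - (1 + w) • X₂) :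
    (frame X₁ Y₁)ᴴ * Jmat n * frame X₃ Y₃
      = w • ((X₁ + Complex.I • Y₁)ᴴ * (X₂ + Complex.I • Y₂))
        + (X₁ - Complex.I • Y₁)ᴴ * (X₂ - Complex.I • Y₂) := by
  rw [frameH_J_frame, hX₃, hY₃, expandPP, expandMM]
  simp only [Matrix.mul_add, Matrix.mul_sub, Matrix.mul_smul, smul_add, smul_sub, smul_smul]
  match_scalars <;> ring


section Mmatrix

variable {n : ℕ} (w : ℂ)

/-- The `2n × 2n` rotation-like matrix. -/
def Mrot (n : ℕ) (w : ℂ) : Matrix (Fin n ⊕ Fin n) (Fin n ⊕ Fin n) ℂ :=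
  (Complex.I * (1 - w)) • (1 : Matrix (Fin n ⊕ Fin n) (Fin n ⊕ Fin n) ℂ) - (1 + w) • Jmat n

lemma Mrot_mul_frame (X Y : Matrix (Fin n) (Fin n) ℂ) :
    Mrot n w * frame X Y
      = (Complex.I * (1 - w)) • frame X Y - (1 + w) • (Jmat n * frame X Y) := by
  rw [Mrot, Matrix.sub_mul, Matrix.smul_mul, Matrix.smul_mul, Matrix.one_mul]

lemma Mrot_unit (hw : w ≠ 0) : IsUnit (Mrot n w) := by
  set a : ℂ := Complex.I * (1 - w) with ha
  set b : ℂ := 1 + w with hb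
  have hscal : a * a + b * b = 4 * w := by
    have hi : Complex.I ^ 2 = -1 := Complex.I_sq
    rw [ha, hb]
    linear_combination (1 - w) ^ 2 * hi
  have key : ∀ (s : ℂ), (a • 1 - b • Jmat n) * (s • (a • 1 + b • Jmat n))
      = s • ((a * a + b * b) • (1 : Matrix (Fin n ⊕ Fin n) (Fin n ⊕ Fin n) ℂ)) := by
    intro s
    simp only [Matrix.mul_smul, Matrix.sub_mul, Matrix.mul_add, Matrix.smul_mul,
      Matrix.mul_smul, Matrix.one_mul, Matrix.mul_one, smul_smul, J_sq, smul_neg,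
      smul_add, smul_sub, add_smul]
    match_scalars <;> ring
  have key2 : ∀ (s : ℂ), (s • (a • 1 + b • Jmat n)) * (a • 1 - b • Jmat n)
      = s • ((a * a + b * b) • (1 : Matrix (Fin n ⊕ Fin n) (Fin n ⊕ Fin n) ℂ)) := by
    intro s
    simp only [Matrix.smul_mul, Matrix.mul_sub, Matrix.add_mul, Matrix.smul_mul,
      Matrix.mul_smul, Matrix.one_mul, Matrix.mul_one, smul_smul, J_sq, smul_neg,
      smul_add, smul_sub, add_smul]
    match_scalars <;> ring
  have h4 : (4 * w) ≠ 0 := by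
    intro h
    apply hw
    simpa using h
  refine ⟨⟨Mrot n w, (4 * w)⁻¹ • (a • 1 + b • Jmat n), ?_, ?_⟩, rfl⟩
  · show Mrot n w * ((4 * w)⁻¹ • (a • 1 + b • Jmat n)) = 1
    rw [Mrot, ← ha, ← hb, key, hscal, smul_smul, inv_mul_cancel₀ h4, one_smul]
  · show ((4 * w)⁻¹ • (a • 1 + b • Jmat n)) * Mrot n w = 1
    rw [Mrot, ← ha, ← hb, key2, hscal, smul_smul, inv_mul_cancel₀ h4, one_smul]

lemma Mrot_H_J_Mrot (hw : (starRingEnd ℂ) w * w = 1) :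
    (Mrot n w)ᴴ * Jmat n * Mrot n w = (4 : ℂ) • Jmat n := by
  set a : ℂ := Complex.I * (1 - w) with ha
  set b : ℂ := 1 + w with hb
  have hMH : (Mrot n w)ᴴ = (starRingEnd ℂ a) • 1 + (starRingEnd ℂ b) • Jmat n := by
    rw [Mrot, conjTranspose_sub, conjTranspose_smul, conjTranspose_smul, conjTranspose_one,
      J_H, smul_neg, sub_neg_eq_add, ← ha, ← hb]
    rfl
  have hc1 : starRingEnd ℂ a * b - starRingEnd ℂ b * a = 0 := by
    rw [ha, hb]
    simp only [_root_.map_mul, _root_.map_sub, _root_.map_add, _root_.map_one, Complex.conj_I]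
    linear_combination (2 * Complex.I) * hw
  have hc2 : starRingEnd ℂ a * a + starRingEnd ℂ b * b = 4 := by
    rw [ha, hb]
    simp only [_root_.map_mul, _root_.map_sub, _root_.map_add, _root_.map_one, Complex.conj_I]
    linear_combination 2 * hw +
      (w + (starRingEnd ℂ) w - (starRingEnd ℂ) w * w - 1) * Complex.I_sq
  rw [hMH, Mrot, ← ha, ← hb]
  set s := starRingEnd ℂ a
  set t := starRingEnd ℂ b
  have expand : (s • 1 + t • Jmat n) * Jmat n * (a • 1 - b • Jmat n)
      = (s * a + t * b) • Jmat n + (s * b - t * a) • (1 : Matrix (Fin n ⊕ Fin n) (Fin n ⊕ Fin n) ℂ) := by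
    simp only [Matrix.add_mul, Matrix.sub_mul, Matrix.mul_sub, Matrix.mul_add,
      Matrix.smul_mul, Matrix.mul_smul, Matrix.one_mul, Matrix.mul_one, smul_smul,
      J_sq, smul_neg, add_smul, sub_smul, smul_sub, smul_add, neg_one_mul, mul_neg_one,
      Matrix.mul_neg, Matrix.neg_mul]
    match_scalars <;> ring
  rw [expand, hc1, hc2]
  simp

end Mmatrix

section Final

/-- Let `𝐗₁, 𝐗₂` be frames for Lagrangian subspaces `ℓ₁, ℓ₂` of `ℂ^{2n}`
and let `w̃ ∈ ℂ` with `|w̃| = 1`. Define `𝐗₃ := i(1 − w̃)𝐗₂ − (1 + w̃)J𝐗₂`. Then `𝐗₃` is a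
frame for a Lagrangian subspace `ℓ₃`, and
`dim ker(W̃ − w̃I) = dim ker(𝐗₁* J 𝐗₃) = dim(ℓ₁ ∩ ℓ₃)`. -/
theorem rotated_frame_lagrangian {n : ℕ} (X₁ Y₁ X₂ Y₂ X₃ Y₃ : Matrix (Fin n) (Fin n) ℂ)
    (h₁ : IsLagrangianFrame X₁ Y₁) (h₂ : IsLagrangianFrame X₂ Y₂)
    (w : ℂ) (hw : ‖w‖ = 1)
    (h₃ : frame X₃ Y₃ =
      (Complex.I * (1 - w)) • frame X₂ Y₂ - (1 + w) • (Jmat n * frame X₂ Y₂)) :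
    IsLagrangianFrame X₃ Y₃ ∧
    Module.finrank ℂ (LinearMap.ker (tW X₁ Y₁ X₂ Y₂ - w • 1).mulVecLin) =
      Module.finrank ℂ (LinearMap.ker ((frame X₁ Y₁)ᴴ * Jmat n * frame X₃ Y₃).mulVecLin) ∧
    Module.finrank ℂ (LinearMap.ker ((frame X₁ Y₁)ᴴ * Jmat n * frame X₃ Y₃).mulVecLin) =
      Module.finrank ℂ (frameSpan X₁ Y₁ ⊓ frameSpan X₃ Y₃ : Submodule ℂ ((Fin n ⊕ Fin n) → ℂ)) := by
  -- scalar facts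
  have hw0 : w ≠ 0 := by
    intro h; rw [h] at hw; simp at hw
  have hn : Complex.normSq w = 1 := by
    rw [Complex.normSq_eq_norm_sq, hw]; norm_num
  have hwc : (starRingEnd ℂ) w * w = 1 := by
    rw [mul_comm, Complex.mul_conj, hn]; norm_num
  obtain ⟨hinj₁, hmat₁⟩ := (isLagrangianFrame_iff X₁ Y₁).mp h₁
  obtain ⟨hinj₂, hmat₂⟩ := (isLagrangianFrame_iff X₂ Y₂).mp h₂
  obtain ⟨hX₃, hY₃⟩ := blocks_of_h₃ h₃
  have hMf : frame X₃ Y₃ = Mrot n w * frame X₂ Y₂ := by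
    rw [Mrot_mul_frame, h₃]
  have hMu : IsUnit (Mrot n w) := Mrot_unit w hw0
  -- Part 1 : X₃ is a Lagrangian frame
  have hinj₃ : Function.Injective (frame X₃ Y₃).mulVecLin := by
    rw [hMf, Matrix.mulVecLin_mul, LinearMap.coe_comp]
    have hMinj : Function.Injective (Mrot n w).mulVecLin := by
      have := Matrix.mulVec_injective_iff_isUnit.mpr hMu
      simpa [Matrix.mulVecLin_apply, Function.Injective] using this
    exact hMinj.comp hinj₂
  have hmat₃ : (frame X₃ Y₃)ᴴ * Jmat n * frame X₃ Y₃ = 0 := by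
    rw [hMf, conjTranspose_mul]
    have hassoc : (frame X₂ Y₂)ᴴ * (Mrot n w)ᴴ * Jmat n * (Mrot n w * frame X₂ Y₂)
        = (frame X₂ Y₂)ᴴ * (((Mrot n w)ᴴ * Jmat n * Mrot n w) * frame X₂ Y₂) := by
      simp only [Matrix.mul_assoc]
    rw [hassoc, Mrot_H_J_Mrot w hwc, Matrix.smul_mul, Matrix.mul_smul,
      ← Matrix.mul_assoc, hmat₂, smul_zero]
  have hlag₃ : IsLagrangianFrame X₃ Y₃ := (isLagrangianFrame_iff _ _).mpr ⟨hinj₃, hmat₃⟩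
  refine ⟨hlag₃, ?_, ?_⟩
  -- Part 2 : kernel dimensions agree
  · have hc₁ := XYcomm hmat₁
    have hc₂ := XYcomm hmat₂
    have hgu₁ : IsUnit ((frame X₁ Y₁)ᴴ * frame X₁ Y₁) := gram_unit hinj₁
    have hgu₂ : IsUnit ((frame X₂ Y₂)ᴴ * frame X₂ Y₂) := gram_unit hinj₂
    have hA₁ : IsUnit (X₁ + Complex.I • Y₁) :=
      unit_of_gram (by rw [plus_gram hc₁]; exact hgu₁)
    have hB₁ : IsUnit (X₁ - Complex.I • Y₁) :=
      unit_of_gram (by rw [minus_gram hc₁]; exact hgu₁)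
    have hA₂ : IsUnit (X₂ + Complex.I • Y₂) :=
      unit_of_gram (by rw [plus_gram hc₂]; exact hgu₂)
    have hB₂ : IsUnit (X₂ - Complex.I • Y₂) :=
      unit_of_gram (by rw [minus_gram hc₂]; exact hgu₂)
    have hgram₁ : (X₁ + Complex.I • Y₁)ᴴ * (X₁ + Complex.I • Y₁)
        = (X₁ - Complex.I • Y₁)ᴴ * (X₁ - Complex.I • Y₁) :=
      (plus_gram hc₁).trans (minus_gram hc₁).symm
    have hB₁d := (Matrix.isUnit_iff_isUnit_det _).mp hB₁
    have hA₂d := (Matrix.isUnit_iff_isUnit_det _).mp hA₂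
    have e1 : (X₂ + Complex.I • Y₂)⁻¹ * (X₂ + Complex.I • Y₂) = 1 :=
      Matrix.nonsing_inv_mul _ hA₂d
    have e2 : (X₁ - Complex.I • Y₁) * (X₁ - Complex.I • Y₁)⁻¹ = 1 :=
      Matrix.mul_nonsing_inv _ hB₁d
    have hTW : tW X₁ Y₁ X₂ Y₂
        = -((X₁ + Complex.I • Y₁) * ((X₁ - Complex.I • Y₁)⁻¹ *
          ((X₂ - Complex.I • Y₂) * (X₂ + Complex.I • Y₂)⁻¹))) := by
      rw [tW]; simp only [Matrix.mul_assoc]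
    have hkey := key_identity (X₁ := X₁) (Y₁ := Y₁) hX₃ hY₃
    have hconj : (X₁ + Complex.I • Y₁)ᴴ * ((tW X₁ Y₁ X₂ Y₂ - w • 1) * (X₂ + Complex.I • Y₂))
        = -((frame X₁ Y₁)ᴴ * Jmat n * frame X₃ Y₃) := by
      rw [hkey]
      calc (X₁ + Complex.I • Y₁)ᴴ * ((tW X₁ Y₁ X₂ Y₂ - w • 1) * (X₂ + Complex.I • Y₂))
          = -((X₁ + Complex.I • Y₁)ᴴ * ((X₁ + Complex.I • Y₁) * ((X₁ - Complex.I • Y₁)⁻¹ *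
              ((X₂ - Complex.I • Y₂) * ((X₂ + Complex.I • Y₂)⁻¹ * (X₂ + Complex.I • Y₂))))))
            - w • ((X₁ + Complex.I • Y₁)ᴴ * (X₂ + Complex.I • Y₂)) := by
            rw [hTW]
            simp only [Matrix.sub_mul, Matrix.mul_sub, Matrix.neg_mul, Matrix.mul_neg,
              Matrix.smul_mul, Matrix.mul_smul, Matrix.one_mul, Matrix.mul_assoc]
        _ = -(((X₁ + Complex.I • Y₁)ᴴ * (X₁ + Complex.I • Y₁)) * ((X₁ - Complex.I • Y₁)⁻¹ *
              (X₂ - Complex.I • Y₂)))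
            - w • ((X₁ + Complex.I • Y₁)ᴴ * (X₂ + Complex.I • Y₂)) := by
            rw [e1, Matrix.mul_one]
            simp only [Matrix.mul_assoc]
        _ = -((X₁ - Complex.I • Y₁)ᴴ * (X₂ - Complex.I • Y₂))
            - w • ((X₁ + Complex.I • Y₁)ᴴ * (X₂ + Complex.I • Y₂)) := by
            rw [hgram₁, Matrix.mul_assoc ((X₁ - Complex.I • Y₁)ᴴ),
              ← Matrix.mul_assoc (X₁ - Complex.I • Y₁), e2, Matrix.one_mul]
        _ = -(w • ((X₁ + Complex.I • Y₁)ᴴ * (X₂ + Complex.I • Y₂))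
            + (X₁ - Complex.I • Y₁)ᴴ * (X₂ - Complex.I • Y₂)) := by abel
    have hA₁H : IsUnit (X₁ + Complex.I • Y₁)ᴴ := by
      rw [Matrix.isUnit_iff_isUnit_det, Matrix.det_conjTranspose, isUnit_star]
      exact (Matrix.isUnit_iff_isUnit_det _).mp hA₁
    have s1 : Module.finrank ℂ
          (LinearMap.ker ((tW X₁ Y₁ X₂ Y₂ - w • 1) * (X₂ + Complex.I • Y₂)).mulVecLin)
        = Module.finrank ℂ (LinearMap.ker (tW X₁ Y₁ X₂ Y₂ - w • 1).mulVecLin) :=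
      finrank_ker_mul_right _ _ hA₂
    have s2 : LinearMap.ker ((X₁ + Complex.I • Y₁)ᴴ *
          ((tW X₁ Y₁ X₂ Y₂ - w • 1) * (X₂ + Complex.I • Y₂))).mulVecLin
        = LinearMap.ker ((tW X₁ Y₁ X₂ Y₂ - w • 1) * (X₂ + Complex.I • Y₂)).mulVecLin :=
      ker_mul_left _ _ hA₁H
    have s3 : LinearMap.ker (-((frame X₁ Y₁)ᴴ * Jmat n * frame X₃ Y₃)).mulVecLin
        = LinearMap.ker ((frame X₁ Y₁)ᴴ * Jmat n * frame X₃ Y₃).mulVecLin := by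
      ext v
      simp [Matrix.mulVecLin_apply, Matrix.neg_mulVec, neg_eq_zero, Matrix.mul_assoc]
    rw [← s1, ← s2, hconj, s3]
  -- Part 3 : kernel dimension equals dimension of intersection
  · have hker₁ := span_eq_ker h₁
    have hmem : ∀ c : (Fin n → ℂ),
        c ∈ LinearMap.ker ((frame X₁ Y₁)ᴴ * Jmat n * frame X₃ Y₃).mulVecLin →
        (frame X₃ Y₃).mulVecLin c ∈ (frameSpan X₁ Y₁ ⊓ frameSpan X₃ Y₃) := by
      intro c hc
      rw [LinearMap.mem_ker, Matrix.mulVecLin_apply] at hc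
      refine Submodule.mem_inf.mpr ⟨?_, ?_⟩
      · rw [hker₁, LinearMap.mem_ker, Matrix.mulVecLin_apply, Matrix.mulVecLin_apply,
          Matrix.mulVec_mulVec]
        exact hc

      · rw [frameSpan_eq_range]; exact ⟨c, rfl⟩
    let f : (LinearMap.ker ((frame X₁ Y₁)ᴴ * Jmat n * frame X₃ Y₃).mulVecLin) →ₗ[ℂ]
        ↥(frameSpan X₁ Y₁ ⊓ frameSpan X₃ Y₃) :=
      LinearMap.codRestrict _
        ((frame X₃ Y₃).mulVecLin ∘ₗ
          (LinearMap.ker ((frame X₁ Y₁)ᴴ * Jmat n * frame X₃ Y₃).mulVecLin).subtype)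
        (fun c => hmem c c.2)
    have hbij : Function.Bijective f := by
      constructor
      · intro c c' hcc
        have h5 : (frame X₃ Y₃).mulVecLin c = (frame X₃ Y₃).mulVecLin c' := by
          have := congrArg Subtype.val hcc
          simpa [f, LinearMap.codRestrict] using this
        exact Subtype.ext (hinj₃ h5)
      · rintro ⟨y, hy⟩
        obtain ⟨hy₁, hy₃⟩ := Submodule.mem_inf.mp hy
        rw [frameSpan_eq_range] at hy₃
        obtain ⟨a, ha⟩ := hy₃
        have haK : a ∈ LinearMap.ker ((frame X₁ Y₁)ᴴ * Jmat n * frame X₃ Y₃).mulVecLin := by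
          rw [hker₁, LinearMap.mem_ker, Matrix.mulVecLin_apply] at hy₁
          have hsplit : ((frame X₁ Y₁)ᴴ * Jmat n * frame X₃ Y₃) *ᵥ a
              = ((frame X₁ Y₁)ᴴ * Jmat n) *ᵥ ((frame X₃ Y₃) *ᵥ a) :=
            (Matrix.mulVec_mulVec a ((frame X₁ Y₁)ᴴ * Jmat n) (frame X₃ Y₃)).symm
          have ha' : frame X₃ Y₃ *ᵥ a = y := ha
          rw [LinearMap.mem_ker, Matrix.mulVecLin_apply, hsplit, ha']
          exact hy₁
        refine ⟨⟨a, haK⟩, ?_⟩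
        apply Subtype.ext
        simpa [f, LinearMap.codRestrict] using ha
    exact (LinearEquiv.ofBijective f hbij).finrank_eq

end Final
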